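/- Let y ∈ ℂ^n and c ∈ ℂ^n with |c_j| = 1 for all j, and let A ⊆ {1,…,n} be a set of indices such that for all j ∈ A, the phase of y_j^* c_j lies in [−π/p, π/p) for an integer p ≥ 3. Let B = {1,…,n} \ A. Then |⟨y, c⟩| ≥ c₀ · Σ_{j∈A} |y_j| − Σ_{j∈B} |y_j|, where c₀ = √(cos(2π/p)). -/

import Mathlib

set_option maxHeartbeats 1000000

open Real

/-- If `|c_j| = 1` for all `j` and the phase of `y_j^* c_j` lies in `[-π/p, π/p)` for all
`j ∈ A` (with `p ≥ 3`), then `|⟨y, c⟩| ≥ √(cos(2π/p)) Σ_{j∈A} |y_j| − Σ_{j∉A} |y_j|`. -/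
theorem stmt18 (n p : ℕ) (hp : 3 ≤ p) (y c : Fin n → ℂ)
    (hc : ∀ j, ‖c j‖ = 1)
    (A : Finset (Fin n))
    (hA : ∀ j ∈ A, ((starRingEnd ℂ) (y j) * c j).arg ∈
      Set.Ico (-(π / p)) (π / p)) :
    Real.sqrt (Real.cos (2 * π / p)) * ∑ j ∈ A, ‖y j‖
        - ∑ j ∈ Aᶜ, ‖y j‖ ≤
      ‖∑ j, (starRingEnd ℂ) (y j) * c j‖ := by
  set z : Fin n → ℂ := fun j => (starRingEnd ℂ) (y j) * c j with hz
  have hp0 : (0:ℝ) < p := by positivity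
  have habs : ∀ j, ‖z j‖ = ‖y j‖ := by
    intro j
    simp [hz, map_mul, hc j]
  have hpp2 : π / p ≤ π / 2 := by
    apply div_le_div_of_nonneg_left Real.pi_pos.le (by norm_num)
    exact_mod_cast (by omega : 2 ≤ p)
  have hpp0 : 0 ≤ π / p := by positivity
  have hcosnn : 0 ≤ Real.cos (π / p) :=
    Real.cos_nonneg_of_mem_Icc ⟨by linarith, hpp2⟩
  -- step 1 : sqrt (cos (2π/p)) ≤ cos (π/p)
  have hsqrt : Real.sqrt (Real.cos (2 * π / p)) ≤ Real.cos (π / p) := by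
    have h1 : Real.cos (2 * π / p) ≤ Real.cos (π / p) ^ 2 := by
      have : 2 * π / p = 2 * (π / p) := by ring
      rw [this, Real.cos_two_mul]
      nlinarith [Real.neg_one_le_cos (π / p), Real.cos_le_one (π / p)]
    calc Real.sqrt (Real.cos (2 * π / p)) ≤ Real.sqrt (Real.cos (π / p) ^ 2) :=
          Real.sqrt_le_sqrt h1
      _ = Real.cos (π / p) := by
          rw [Real.sqrt_sq hcosnn]
  -- step 2 : real part bound on A
  have hre : ∀ j ∈ A, Real.cos (π / p) * ‖y j‖ ≤ (z j).re := by
    intro j hj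
    rcases eq_or_ne (z j) 0 with h0 | h0
    · simp [h0, ← habs j, h0]
    · have harg := hA j hj
      have h1 : |(z j).arg| ≤ π / p := abs_le.mpr ⟨harg.1, harg.2.le⟩
      have h2 : π / p ≤ π := by linarith [Real.pi_pos]
      have hcosarg' := Real.cos_le_cos_of_nonneg_of_le_pi (abs_nonneg ((z j).arg)) h2 h1
      rw [Real.cos_abs] at hcosarg'
      have hcosarg : Real.cos (π / p) ≤ Real.cos ((z j).arg) := hcosarg'
      have habsz : (z j).re = ‖z j‖ * Real.cos ((z j).arg) :=
        (Complex.norm_mul_cos_arg (z j)).symm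
      rw [habsz, habs j]
      have hynn : 0 ≤ ‖y j‖ := norm_nonneg _
      nlinarith
  -- step 3 : chain
  have hreB : ∀ j ∈ Aᶜ, -‖y j‖ ≤ (z j).re := by
    intro j _
    have := Complex.abs_re_le_norm (z j)
    rw [habs j] at this
    cases abs_le.mp this with
    | intro h1 h2 => linarith
  have hsplit : (∑ j, z j).re = ∑ j ∈ A, (z j).re + ∑ j ∈ Aᶜ, (z j).re := by
    rw [← Finset.sum_add_sum_compl A]
    simp [Complex.add_re]
  have hmain : Real.cos (π / p) * ∑ j ∈ A, ‖y j‖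
      - ∑ j ∈ Aᶜ, ‖y j‖ ≤ (∑ j, z j).re := by
    rw [hsplit, Finset.mul_sum]
    have h1 : ∑ j ∈ A, Real.cos (π / p) * ‖y j‖ ≤ ∑ j ∈ A, (z j).re :=
      Finset.sum_le_sum hre
    have h2a : ∑ j ∈ Aᶜ, -‖y j‖ ≤ ∑ j ∈ Aᶜ, (z j).re :=
      Finset.sum_le_sum hreB
    have h2b : -(∑ j ∈ Aᶜ, ‖y j‖) = ∑ j ∈ Aᶜ, -‖y j‖ := by
      simp
    have h2 : -(∑ j ∈ Aᶜ, ‖y j‖) ≤ ∑ j ∈ Aᶜ, (z j).re := h2b ▸ h2a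
    linarith
  have hfinal : (∑ j, z j).re ≤ ‖∑ j, z j‖ := Complex.re_le_norm _
  have hSnn : 0 ≤ ∑ j ∈ A, ‖y j‖ :=
    Finset.sum_nonneg fun j _ => norm_nonneg _
  have := mul_le_mul_of_nonneg_right hsqrt hSnn
  calc Real.sqrt (Real.cos (2 * π / p)) * ∑ j ∈ A, ‖y j‖
        - ∑ j ∈ Aᶜ, ‖y j‖
      ≤ Real.cos (π / p) * ∑ j ∈ A, ‖y j‖
        - ∑ j ∈ Aᶜ, ‖y j‖ := by linarith
    _ ≤ (∑ j, z j).re := hmain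
    _ ≤ ‖∑ j, z j‖ := hfinal
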